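/- Mrs. Gerber's Lemma (convexity form): for any fixed p ∈ [0,1], the function mapping h(δ) to h(p∗δ) is convex; that is, the parametric curve (h(δ), h(p∗δ)) for δ ∈ [0,1/2] is the graph of a convex function. -/

import Mathlib

open Real Set


/-- Binary convolution: `a ∗ b = a(1-b) + (1-a)b`. -/
noncomputable def bconv (a b : ℝ) : ℝ := a * (1 - b) + (1 - a) * b

/-- Base-2 binary entropy function (with `h(0) = h(1) = 0`, since `logb 2 0 = 0`). -/
noncomputable def hbin (x : ℝ) : ℝ := -(x * Real.logb 2 x) - (1 - x) * Real.logb 2 (1 - x)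

lemma log2_pos : 0 < Real.log 2 := Real.log_pos one_lt_two

lemma hbin_eq (x : ℝ) : hbin x = (-(x * Real.log x) - (1 - x) * Real.log (1 - x)) / Real.log 2 := by
  unfold hbin Real.logb
  field_simp

lemma continuous_hbin : Continuous hbin := by
  have h1 : Continuous fun x : ℝ => x * Real.log x := Real.continuous_mul_log
  have h2 : Continuous fun x : ℝ => (1 - x) * Real.log (1 - x) :=
    h1.comp (continuous_const.sub continuous_id)
  have : Continuous fun x : ℝ => (-(x * Real.log x) - (1 - x) * Real.log (1 - x)) / Real.log 2 :=
    (h1.neg.sub h2).div_const _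
  simpa [← hbin_eq] using this

lemma hbin_zero : hbin 0 = 0 := by simp [hbin]

lemma hbin_half : hbin (1/2) = 1 := by
  rw [hbin_eq]
  rw [show (1:ℝ) - 1/2 = 1/2 by norm_num, show Real.log (1/2) = -Real.log 2 by
    rw [show (1:ℝ)/2 = 2⁻¹ by norm_num, Real.log_inv]]
  field_simp
  norm_num

lemma hbin_hasDerivAt {x : ℝ} (hx : x ∈ Ioo (0:ℝ) 1) :
    HasDerivAt hbin ((Real.log (1 - x) - Real.log x) / Real.log 2) x := by
  have hx0 : x ≠ 0 := ne_of_gt hx.1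
  have hx1 : (1:ℝ) - x ≠ 0 := by have := hx.2; intro h; linarith [sub_eq_zero.mp h]
  have h1 : HasDerivAt (fun x : ℝ => x * Real.log x) (Real.log x + 1) x :=
    Real.hasDerivAt_mul_log hx0
  have hi : HasDerivAt (fun x : ℝ => 1 - x) (-1) x := by
    simpa using (hasDerivAt_id x).const_sub 1
  have h2 : HasDerivAt (fun x : ℝ => (1 - x) * Real.log (1 - x))
      ((Real.log (1 - x) + 1) * (-1)) x :=
    (Real.hasDerivAt_mul_log hx1).comp x hi
  have h3 : HasDerivAt (fun x : ℝ => (-(x * Real.log x) - (1 - x) * Real.log (1 - x)) / Real.log 2)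
      ((-(Real.log x + 1) - (Real.log (1 - x) + 1) * (-1)) / Real.log 2) x :=
    (h1.neg.sub h2).div_const _
  have : hbin = fun x : ℝ => (-(x * Real.log x) - (1 - x) * Real.log (1 - x)) / Real.log 2 := by
    funext z; exact hbin_eq z
  rw [this]
  convert h3 using 1
  ring

lemma hbin_deriv_pos {x : ℝ} (hx : x ∈ Ioo (0:ℝ) (1/2)) :
    0 < (Real.log (1 - x) - Real.log x) / Real.log 2 := by
  apply div_pos _ log2_pos
  have : Real.log x < Real.log (1 - x) := Real.log_lt_log hx.1 (by linarith [hx.2])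
  linarith

lemma hbin_strictMono : StrictMonoOn hbin (Icc (0:ℝ) (1/2)) := by
  apply strictMonoOn_of_deriv_pos (convex_Icc _ _) (continuous_hbin.continuousOn)
  intro x hx
  rw [interior_Icc] at hx
  rw [(hbin_hasDerivAt ⟨hx.1, by linarith [hx.2]⟩).deriv]
  exact hbin_deriv_pos hx

lemma hbin_maps {x : ℝ} (hx : x ∈ Icc (0:ℝ) (1/2)) : hbin x ∈ Icc (0:ℝ) 1 := by
  constructor
  · have := hbin_strictMono.monotoneOn (left_mem_Icc.mpr (by norm_num)) hx hx.1
    simpa [hbin_zero] using this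
  · have := hbin_strictMono.monotoneOn hx (right_mem_Icc.mpr (by norm_num)) hx.2
    have h12 : hbin (1/2) = 1 := hbin_half
    rw [h12] at this
    exact this

/-- Key log bound: `log((1-z)/z) ≥ 2(1-2z)` on `(0,1/2]`. -/
lemma log_bound {z : ℝ} (hz0 : 0 < z) (hz2 : z ≤ 1/2) :
    2 * (1 - 2*z) ≤ Real.log (1 - z) - Real.log z := by
  set f : ℝ → ℝ := fun z => Real.log (1 - z) - Real.log z + 4 * z with hf
  have hanti : AntitoneOn f (Ioc (0:ℝ) (1/2)) := by
    apply antitoneOn_of_hasDerivWithinAt_nonpos (convex_Ioc _ _)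
      (f' := fun z => -(1-z)⁻¹ - z⁻¹ + 4)
    · intro w hw
      have hw0 : w ≠ 0 := ne_of_gt hw.1
      have hw1 : (1:ℝ) - w ≠ 0 := by intro h; have := sub_eq_zero.mp h; linarith [hw.2]
      apply ContinuousWithinAt.add
      apply ContinuousWithinAt.sub
      · exact ((Real.continuousAt_log hw1).comp
          (continuous_const.sub continuous_id).continuousAt).continuousWithinAt
      · exact (Real.continuousAt_log hw0).continuousWithinAt
      · exact (continuous_const.mul continuous_id).continuousAt.continuousWithinAt
    · intro w hw
      rw [interior_Ioc] at hw
      have hw0 : w ≠ 0 := ne_of_gt hw.1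
      have hw1 : (1:ℝ) - w ≠ 0 := by intro h; have := sub_eq_zero.mp h; linarith [hw.2]
      have h1 : HasDerivAt (fun z : ℝ => Real.log (1 - z)) ((1-w)⁻¹ * (-1)) w :=
        (Real.hasDerivAt_log hw1).comp w (by simpa using (hasDerivAt_id w).const_sub 1)
      have h2 : HasDerivAt f ((1-w)⁻¹ * (-1) - w⁻¹ + 4) w := by
        have := (h1.sub (Real.hasDerivAt_log hw0)).add ((hasDerivAt_id w).const_mul 4)
        exact this.congr_deriv (by ring)
      have : HasDerivAt f (-(1-w)⁻¹ - w⁻¹ + 4) w := by convert h2 using 1; ring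
      exact this.hasDerivWithinAt
    · intro w hw
      rw [interior_Ioc] at hw
      have hw0 : 0 < w := hw.1
      have hw1 : 0 < 1 - w := by linarith [hw.2]
      have hkey : 4 * (w * (1 - w)) ≤ 1 := by nlinarith [sq_nonneg (1 - 2*w)]
      have h1 : (4:ℝ) ≤ (1-w)⁻¹ * w⁻¹ := by
        rw [← mul_inv]
        rw [le_inv_comm₀ (by norm_num) (by positivity)]
        nlinarith
      have h2 : (1-w)⁻¹ * w⁻¹ ≤ (1-w)⁻¹ + w⁻¹ := by
        have e : (1-w)⁻¹ * w⁻¹ = ((1-w) + w) * ((1-w)⁻¹ * w⁻¹) := by ring_nf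
        rw [e]
        have : ((1-w) + w) * ((1-w)⁻¹ * w⁻¹) = w⁻¹ + (1-w)⁻¹ := by
          field_simp
        rw [this]; linarith
      linarith
  have hmem1 : z ∈ Ioc (0:ℝ) (1/2) := ⟨hz0, hz2⟩
  have hmem2 : (1/2 : ℝ) ∈ Ioc (0:ℝ) (1/2) := by norm_num
  have := hanti hmem1 hmem2 hz2
  have hval : f (1/2) = 2 := by
    simp only [hf]
    norm_num
  rw [hval] at this
  simp only [hf] at this
  linarith

/-- The auxiliary function `φ(z) = z(1-z)(log(1-z)-log z)/(1-2z)` is monotone on `(0,1/2)`. -/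
lemma phi_mono : MonotoneOn (fun z : ℝ => z * (1 - z) * (Real.log (1 - z) - Real.log z) / (1 - 2*z))
    (Ioo (0:ℝ) (1/2)) := by
  set φ : ℝ → ℝ := fun z => z * (1 - z) * (Real.log (1 - z) - Real.log z) / (1 - 2*z) with hφ
  have hder : ∀ z ∈ Ioo (0:ℝ) (1/2), HasDerivAt φ
      (((Real.log (1 - z) - Real.log z) * (1 - 2*z + 2*z^2) - (1 - 2*z)) / (1 - 2*z)^2) z := by
    intro z hz
    have hz0 : z ≠ 0 := ne_of_gt hz.1
    have hz0' : 0 < z := hz.1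
    have hz1 : (0:ℝ) < 1 - z := by linarith [hz.2]
    have hz1' : (1:ℝ) - z ≠ 0 := ne_of_gt hz1
    have hd : (1:ℝ) - 2*z ≠ 0 := by have := hz.2; intro h; nlinarith
    have hlog1 : HasDerivAt (fun z : ℝ => Real.log (1 - z)) ((1-z)⁻¹ * (-1)) z :=
      (Real.hasDerivAt_log hz1').comp z (by simpa using (hasDerivAt_id z).const_sub 1)
    have hnum : HasDerivAt (fun z : ℝ => z * (1 - z) * (Real.log (1 - z) - Real.log z))
        ((1 - 2*z) * (Real.log (1 - z) - Real.log z) + z * (1 - z) * ((1-z)⁻¹ * (-1) - z⁻¹)) z := by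
      have hu : HasDerivAt (fun z : ℝ => z * (1 - z)) (1 - 2*z) z := by
        have := (hasDerivAt_id z).mul ((hasDerivAt_id z).const_sub 1)
        simp only [id_eq] at this
        exact this.congr_deriv (by ring)
      exact hu.mul (hlog1.sub (Real.hasDerivAt_log hz0))
    have hden : HasDerivAt (fun z : ℝ => 1 - 2*z) (-2) z := by
      simpa using ((hasDerivAt_id z).const_mul 2).const_sub 1
    have := hnum.div hden hd
    refine this.congr_deriv ?_
    field_simp
    ring
  apply monotoneOn_of_hasDerivWithinAt_nonneg (convex_Ioo _ _)
    (f' := fun z => ((Real.log (1 - z) - Real.log z) * (1 - 2*z + 2*z^2) - (1 - 2*z)) / (1 - 2*z)^2)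
  · intro z hz
    exact (hder z hz).continuousAt.continuousWithinAt
  · intro z hz
    rw [interior_Ioo] at hz ⊢
    exact (hder z hz).hasDerivWithinAt
  · intro z hz
    rw [interior_Ioo] at hz
    have hz2 : z < 1/2 := hz.2
    have hm : 2 * (1 - 2*z) ≤ Real.log (1 - z) - Real.log z := log_bound hz.1 (le_of_lt hz2)
    have hq : (0:ℝ) < 1 - 2*z + 2*z^2 := by nlinarith [sq_nonneg z, sq_nonneg (1 - z)]
    apply div_nonneg _ (sq_nonneg _)
    nlinarith [sq_nonneg (1 - 2*z)]

/-- Key inequality of Mrs. Gerber's lemma. With `c = 1-2p`, `y = p + cx`: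
`c·y(1-y)(log((1-y)/y)) ≥ c²·x(1-x)(log((1-x)/x))`. -/
lemma key_ineq {p x : ℝ} (hp0 : 0 ≤ p) (hp2 : p ≤ 1/2) (hx : x ∈ Ioo (0:ℝ) (1/2)) :
    (1-2*p)^2 * (x * (1 - x) * (Real.log (1 - x) - Real.log x)) ≤
    (1-2*p) * ((p+(1-2*p)*x) * (1 - (p+(1-2*p)*x)) *
      (Real.log (1 - (p+(1-2*p)*x)) - Real.log (p+(1-2*p)*x))) := by
  set c := 1 - 2*p with hc
  set y := p + c*x with hy
  have hc0 : 0 ≤ c := by simp [hc]; linarith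
  rcases eq_or_lt_of_le hc0 with hceq | hcpos
  · rw [← hceq]; ring_nf; exact le_refl _
  · have hx0 : 0 < x := hx.1
    have hx2 : x < 1/2 := hx.2
    have hxy : x ≤ y := by
      have : y - x = p * (1 - 2*x) := by rw [hy, hc]; ring
      nlinarith
    have hy2 : y < 1/2 := by
      have : 1/2 - y = c * (1/2 - x) := by rw [hy, hc]; ring
      nlinarith
    have hy0 : 0 < y := lt_of_lt_of_le hx0 hxy
    have hmem_x : x ∈ Ioo (0:ℝ) (1/2) := hx
    have hmem_y : y ∈ Ioo (0:ℝ) (1/2) := ⟨hy0, hy2⟩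
    have hφ := phi_mono hmem_x hmem_y hxy
    have h12x : (0:ℝ) < 1 - 2*x := by linarith
    have h12y : (0:ℝ) < 1 - 2*y := by linarith
    have hcross : x * (1 - x) * (Real.log (1 - x) - Real.log x) * (1 - 2*y) ≤
        y * (1 - y) * (Real.log (1 - y) - Real.log y) * (1 - 2*x) :=
      (div_le_div_iff₀ h12x h12y).mp hφ
    have hrel : 1 - 2*y = c * (1 - 2*x) := by rw [hy, hc]; ring
    set Gx := x * (1 - x) * (Real.log (1 - x) - Real.log x) with hGx
    set Gy := y * (1 - y) * (Real.log (1 - y) - Real.log y) with hGy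
    rw [hrel] at hcross
    have h1 : c * (Gx * (c * (1 - 2*x))) ≤ c * (Gy * (1 - 2*x)) :=
      mul_le_mul_of_nonneg_left hcross hc0
    have h2 : c^2 * Gx * (1 - 2*x) ≤ c * Gy * (1 - 2*x) := by nlinarith [h1]
    exact le_of_mul_le_mul_right h2 h12x

lemma Phi_mono {p : ℝ} (hp0 : 0 ≤ p) (hp2 : p ≤ 1/2) :
    MonotoneOn (fun x : ℝ => (1-2*p) *
      ((Real.log (1 - (p+(1-2*p)*x)) - Real.log (p+(1-2*p)*x)) / (Real.log (1-x) - Real.log x)))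
    (Ioo (0:ℝ) (1/2)) := by
  have hder : ∀ z ∈ Ioo (0:ℝ) (1/2),
      HasDerivAt (fun x : ℝ => (1-2*p) *
        ((Real.log (1 - (p+(1-2*p)*x)) - Real.log (p+(1-2*p)*x)) / (Real.log (1-x) - Real.log x)))
      (((1-2*p) * ((p+(1-2*p)*z) * (1 - (p+(1-2*p)*z)) *
          (Real.log (1 - (p+(1-2*p)*z)) - Real.log (p+(1-2*p)*z)))
        - (1-2*p)^2 * (z*(1-z)*(Real.log (1-z) - Real.log z)))
        / (z*(1-z) * ((p+(1-2*p)*z)*(1 - (p+(1-2*p)*z))) * (Real.log (1-z) - Real.log z)^2)) z := by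
    intro z hz
    have hz0 : 0 < z := hz.1
    have hz2 : z < 1/2 := hz.2
    have hz1 : (0:ℝ) < 1 - z := by linarith
    have hc0 : (0:ℝ) ≤ 1 - 2*p := by linarith
    set y := p + (1-2*p)*z with hy
    have hzy : z ≤ y := by have : y - z = p * (1 - 2*z) := by rw [hy]; ring
                           nlinarith
    have hy0 : 0 < y := lt_of_lt_of_le hz0 hzy
    have hy2 : y ≤ 1/2 := by have : 1/2 - y = (1-2*p) * (1/2 - z) := by rw [hy]; ring
                             nlinarith
    have h1y : (0:ℝ) < 1 - y := by linarith
    have hM : 0 < Real.log (1 - z) - Real.log z := by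
      have := Real.log_lt_log hz0 (show z < 1 - z by linarith)
      linarith
    have hinner : HasDerivAt (fun x : ℝ => p + (1-2*p)*x) (1-2*p) z := by
      simpa using ((hasDerivAt_id z).const_mul (1-2*p)).const_add p
    have hlogy1 : HasDerivAt (fun x : ℝ => Real.log (1 - (p+(1-2*p)*x)))
        ((1-y)⁻¹ * (-(1-2*p))) z := by
      have h := (Real.hasDerivAt_log (ne_of_gt h1y)).comp z (hinner.const_sub 1)
      exact h
    have hlogy2 : HasDerivAt (fun x : ℝ => Real.log (p+(1-2*p)*x)) (y⁻¹ * (1-2*p)) z :=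
      by have h := (Real.hasDerivAt_log (ne_of_gt hy0)).comp z hinner; exact h
    have hlogz1 : HasDerivAt (fun x : ℝ => Real.log (1 - x)) ((1-z)⁻¹ * (-1)) z :=
      (Real.hasDerivAt_log (ne_of_gt hz1)).comp z (by simpa using (hasDerivAt_id z).const_sub 1)
    have hN : HasDerivAt (fun x : ℝ => Real.log (1 - (p+(1-2*p)*x)) - Real.log (p+(1-2*p)*x))
        ((1-y)⁻¹ * (-(1-2*p)) - y⁻¹ * (1-2*p)) z := hlogy1.sub hlogy2
    have hMd : HasDerivAt (fun x : ℝ => Real.log (1-x) - Real.log x)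
        ((1-z)⁻¹ * (-1) - z⁻¹) z := hlogz1.sub (Real.hasDerivAt_log (ne_of_gt hz0))
    have hdiv := (hN.div hMd (ne_of_gt hM)).const_mul (1-2*p)
    refine hdiv.congr_deriv ?_
    rw [hy]
    field_simp [(ne_of_gt h1y : (1:ℝ) - (p+(1-2*p)*z) ≠ 0), (ne_of_gt hy0 : p+(1-2*p)*z ≠ 0),
      ne_of_gt hz0, ne_of_gt hz1, ne_of_gt hM]
    ring
  apply monotoneOn_of_hasDerivWithinAt_nonneg (convex_Ioo _ _)
    (f' := fun z => ((1-2*p) * ((p+(1-2*p)*z) * (1 - (p+(1-2*p)*z)) *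
          (Real.log (1 - (p+(1-2*p)*z)) - Real.log (p+(1-2*p)*z)))
        - (1-2*p)^2 * (z*(1-z)*(Real.log (1-z) - Real.log z)))
        / (z*(1-z) * ((p+(1-2*p)*z)*(1 - (p+(1-2*p)*z))) * (Real.log (1-z) - Real.log z)^2))
  · intro z hz
    exact (hder z hz).continuousAt.continuousWithinAt
  · intro z hz
    rw [interior_Ioo] at hz ⊢
    exact (hder z hz).hasDerivWithinAt
  · intro z hz
    rw [interior_Ioo] at hz
    have hz0 : 0 < z := hz.1
    have hz2 : z < 1/2 := hz.2
    have hz1 : (0:ℝ) < 1 - z := by linarith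
    have hc0 : (0:ℝ) ≤ 1 - 2*p := by linarith
    have hzy : z ≤ p + (1-2*p)*z := by nlinarith
    have hy0 : 0 < p + (1-2*p)*z := lt_of_lt_of_le hz0 hzy
    have hy2 : p + (1-2*p)*z ≤ 1/2 := by nlinarith
    have h1y : (0:ℝ) < 1 - (p + (1-2*p)*z) := by linarith
    have hM : 0 < Real.log (1 - z) - Real.log z := by
      have := Real.log_lt_log hz0 (show z < 1 - z by linarith)
      linarith
    apply div_nonneg
    · have := key_ineq hp0 hp2 hz
      linarith
    · positivity

lemma hbin_symm (z : ℝ) : hbin (1 - z) = hbin z := by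
  unfold hbin; rw [sub_sub_cancel]; ring

lemma mgl_main (p : ℝ) (hp0 : 0 ≤ p) (hp2 : p ≤ 1/2)
    (hinv : ℝ → ℝ)
    (hinv_mem : ∀ t ∈ Set.Icc (0:ℝ) 1, hinv t ∈ Set.Icc (0:ℝ) (1/2))
    (hinv_eq : ∀ t ∈ Set.Icc (0:ℝ) 1, hbin (hinv t) = t) :
    ConvexOn ℝ (Set.Icc (0:ℝ) 1) (fun t => hbin (bconv p (hinv t))) := by
  have h01 : (0:ℝ) ∈ Icc (0:ℝ) 1 := by norm_num
  have h11 : (1:ℝ) ∈ Icc (0:ℝ) 1 := by norm_num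
  have hbinj : InjOn hbin (Icc (0:ℝ) (1/2)) := hbin_strictMono.injOn
  have hinv0 : hinv 0 = 0 := by
    apply hbinj (hinv_mem 0 h01) (by constructor <;> norm_num)
    rw [hinv_eq 0 h01, hbin_zero]
  have hinv1 : hinv 1 = 1/2 := by
    apply hbinj (hinv_mem 1 h11) (by constructor <;> norm_num)
    rw [hinv_eq 1 h11, hbin_half]
  have hmono : StrictMonoOn hinv (Icc (0:ℝ) 1) := by
    intro a ha b hb hab
    apply (hbin_strictMono.lt_iff_lt (hinv_mem a ha) (hinv_mem b hb)).mp
    rw [hinv_eq a ha, hinv_eq b hb]; exact hab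
  have hIoo : ∀ t ∈ Ioo (0:ℝ) 1, hinv t ∈ Ioo (0:ℝ) (1/2) := by
    intro t ht
    have htm : t ∈ Icc (0:ℝ) 1 := Ioo_subset_Icc_self ht
    constructor
    · have := hmono h01 htm ht.1; rwa [hinv0] at this
    · have := hmono htm h11 ht.2; rwa [hinv1] at this
  have himage : hinv '' Icc (0:ℝ) 1 = Icc (0:ℝ) (1/2) := by
    apply Subset.antisymm
    · rintro _ ⟨t, ht, rfl⟩; exact hinv_mem t ht
    · intro x hx
      exact ⟨hbin x, hbin_maps hx, hbinj (hinv_mem _ (hbin_maps hx)) hx (hinv_eq _ (hbin_maps hx))⟩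
  have hcont : ContinuousOn hinv (Icc (0:ℝ) 1) := by
    intro a ha
    rcases eq_or_lt_of_le ha.1 with ha0 | ha0
    · subst a
      have h := continuousWithinAt_right_of_monotoneOn_of_image_mem_nhdsWithin
        hmono.monotoneOn (Icc_mem_nhdsGE_of_mem ⟨le_refl (0:ℝ), one_pos⟩)
        (by rw [himage, hinv0]; exact Icc_mem_nhdsGE_of_mem ⟨le_refl (0:ℝ), by norm_num⟩)
      exact h.mono Icc_subset_Ici_self
    rcases eq_or_lt_of_le ha.2 with ha1 | ha1
    · subst ha1
      have h := continuousWithinAt_left_of_monotoneOn_of_image_mem_nhdsWithin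
        hmono.monotoneOn (Icc_mem_nhdsLE_of_mem ⟨one_pos, le_refl (1:ℝ)⟩)
        (by rw [himage, hinv1]; exact Icc_mem_nhdsLE_of_mem ⟨by norm_num, le_refl _⟩)
      exact h.mono Icc_subset_Iic_self
    · have hmemIoo : a ∈ Ioo (0:ℝ) 1 := ⟨ha0, ha1⟩
      have h := continuousAt_of_monotoneOn_of_image_mem_nhds hmono.monotoneOn
        (Icc_mem_nhds ha0 ha1)
        (by rw [himage]; exact Icc_mem_nhds (hIoo a hmemIoo).1 (hIoo a hmemIoo).2)
      exact h.continuousWithinAt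
  have hfun : (fun t => hbin (bconv p (hinv t))) = fun t => hbin (p + (1-2*p) * hinv t) := by
    funext t
    rw [show bconv p (hinv t) = p + (1-2*p) * hinv t from by unfold bconv; ring]
  rw [hfun]
  have hgder : ∀ t ∈ Ioo (0:ℝ) 1, HasDerivAt (fun t => hbin (p + (1-2*p) * hinv t))
      ((1-2*p) * ((Real.log (1 - (p+(1-2*p)*(hinv t))) - Real.log (p+(1-2*p)*(hinv t)))
        / (Real.log (1-(hinv t)) - Real.log (hinv t)))) t := by
    intro t ht
    set x := hinv t with hx
    have hxI : x ∈ Ioo (0:ℝ) (1/2) := hIoo t ht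
    have hx0 : 0 < x := hxI.1
    have hx2 : x < 1/2 := hxI.2
    have hx1 : (0:ℝ) < 1 - x := by linarith
    have hApos : 0 < (Real.log (1 - x) - Real.log x) / Real.log 2 := hbin_deriv_pos hxI
    have hM : 0 < Real.log (1 - x) - Real.log x := by
      have := Real.log_lt_log hx0 (show x < 1 - x by linarith); linarith
    have H1 : HasDerivAt hbin ((Real.log (1 - x) - Real.log x) / Real.log 2) x :=
      hbin_hasDerivAt ⟨hx0, by linarith⟩
    have hcontAt : ContinuousAt hinv t := hcont.continuousAt (Icc_mem_nhds ht.1 ht.2)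
    have hev : ∀ᶠ u in nhds t, hbin (hinv u) = u := by
      filter_upwards [Ioo_mem_nhds ht.1 ht.2] with u hu
      exact hinv_eq u (Ioo_subset_Icc_self hu)
    have H2 : HasDerivAt hinv ((Real.log (1 - x) - Real.log x) / Real.log 2)⁻¹ t :=
      HasDerivAt.of_local_left_inverse hcontAt H1 (ne_of_gt hApos) hev
    have H3 : HasDerivAt (fun u => p + (1-2*p) * hinv u)
        ((1-2*p) * ((Real.log (1 - x) - Real.log x) / Real.log 2)⁻¹) t :=
      (H2.const_mul _).const_add p
    set y := p + (1-2*p)*x with hy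
    have hc0 : (0:ℝ) ≤ 1 - 2*p := by linarith
    have hzy : x ≤ y := by have : y - x = p * (1 - 2*x) := by rw [hy]; ring
                           nlinarith
    have hy0 : 0 < y := lt_of_lt_of_le hx0 hzy
    have hy2 : y ≤ 1/2 := by have : 1/2 - y = (1-2*p) * (1/2 - x) := by rw [hy]; ring
                             nlinarith
    have H4 : HasDerivAt hbin ((Real.log (1 - y) - Real.log y) / Real.log 2) y :=
      hbin_hasDerivAt ⟨hy0, by linarith⟩
    have H5 := H4.comp t H3
    refine H5.congr_deriv ?_
    rw [hy]
    field_simp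
  apply MonotoneOn.convexOn_of_deriv (convex_Icc (0:ℝ) 1)
  · exact continuous_hbin.comp_continuousOn (continuousOn_const.add (continuousOn_const.mul hcont))
  · rw [interior_Icc]
    intro t ht
    exact (hgder t ht).differentiableAt.differentiableWithinAt
  · rw [interior_Icc]
    intro a ha b hb hab
    rw [(hgder a ha).deriv, (hgder b hb).deriv]
    exact Phi_mono hp0 hp2 (hIoo a ha) (hIoo b hb)
      (hmono.monotoneOn (Ioo_subset_Icc_self ha) (Ioo_subset_Icc_self hb) hab)

/-- Mrs. Gerber's Lemma (convexity form): for any `p ∈ [0,1]`, the map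
`t ↦ h(p ∗ h⁻¹(t))` is convex on `[0,1]`, where `h⁻¹ : [0,1] → [0,1/2]` is the
inverse of the binary entropy restricted to `[0,1/2]`. -/
theorem mrs_gerber_convexity (p : ℝ) (hp : p ∈ Set.Icc (0:ℝ) 1)
    (hinv : ℝ → ℝ)
    (hinv_mem : ∀ t ∈ Set.Icc (0:ℝ) 1, hinv t ∈ Set.Icc (0:ℝ) (1/2))
    (hinv_eq : ∀ t ∈ Set.Icc (0:ℝ) 1, hbin (hinv t) = t) :
    ConvexOn ℝ (Set.Icc (0:ℝ) 1) (fun t => hbin (bconv p (hinv t))) := by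
  rcases le_or_gt p (1/2) with h | h
  · exact mgl_main p hp.1 h hinv hinv_mem hinv_eq
  · have key := mgl_main (1-p) (by linarith [hp.2]) (by linarith) hinv hinv_mem hinv_eq
    have hfe : (fun t => hbin (bconv p (hinv t))) = fun t => hbin (bconv (1-p) (hinv t)) := by
      funext t
      rw [show bconv (1-p) (hinv t) = 1 - bconv p (hinv t) from by unfold bconv; ring, hbin_symm]
    rw [hfe]
    exact key
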